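/- Let 𝔄, 𝔅 be invertible l×l matrices over a field 𝕂 with 𝔄𝔅 = 𝔅𝔄. Then the tuple (𝔄, 𝔄⁻¹(I+𝔅), (I+𝔄)𝔅⁻¹, 𝔅, 𝔅⁻¹(I+𝔄+𝔅)𝔄⁻¹) is a left matrix quiddity sequence of length 5 (i.e. the corresponding product of five 2l×2l block matrices equals −Id), and hence is the quiddity sequence of a two-sided matrix-valued frieze pattern of period 5. -/

import Mathlib

/-- The 2l×2l block matrix `M(𝔞) = [[𝔞, −I], [I, O]]` over a field `𝕂`. -/
noncomputable def Mblk {𝕂 : Type*} [Field 𝕂] {l : ℕ} (a : Matrix (Fin l) (Fin l) 𝕂) :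
    Matrix (Fin l ⊕ Fin l) (Fin l ⊕ Fin l) 𝕂 :=
  Matrix.fromBlocks a (-1) 1 0

/-- A left matrix quiddity sequence: a tuple `(𝔞₁,…,𝔞ₙ)` of l×l matrices with
`M(𝔞ₙ)·M(𝔞ₙ₋₁)···M(𝔞₁) = −Id`. -/
def IsLMQS {𝕂 : Type*} [Field 𝕂] {l : ℕ} (A : List (Matrix (Fin l) (Fin l) 𝕂)) : Prop :=
  (A.reverse.map Mblk).prod = -1

/-- For invertible commuting `𝔄, 𝔅`, the tuple
`(𝔄, 𝔄⁻¹(I+𝔅), (I+𝔄)𝔅⁻¹, 𝔅, 𝔅⁻¹(I+𝔄+𝔅)𝔄⁻¹)` is a left matrix quiddity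
sequence of length 5 (the quiddity sequence of a two-sided matrix-valued frieze
pattern of period 5). -/
theorem gauss_lmqs {𝕂 : Type*} [Field 𝕂] {l : ℕ} (A B : Matrix (Fin l) (Fin l) 𝕂)
    (hA : IsUnit A) (hB : IsUnit B) (hcomm : A * B = B * A) :
    IsLMQS [A, A⁻¹ * (1 + B), (1 + A) * B⁻¹, B, B⁻¹ * (1 + A + B) * A⁻¹] := by
  have hAd : IsUnit A.det := (Matrix.isUnit_iff_isUnit_det A).mp hA
  have hBd : IsUnit B.det := (Matrix.isUnit_iff_isUnit_det B).mp hB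
  have hA1 : A * A⁻¹ = 1 := Matrix.mul_nonsing_inv A hAd
  have hA2 : A⁻¹ * A = 1 := Matrix.nonsing_inv_mul A hAd
  have hB1 : B * B⁻¹ = 1 := Matrix.mul_nonsing_inv B hBd
  have hB2 : B⁻¹ * B = 1 := Matrix.nonsing_inv_mul B hBd
  have c1 : B * A⁻¹ = A⁻¹ * B := by
    calc B * A⁻¹ = A⁻¹ * (A * B) * A⁻¹ := by rw [← mul_assoc, hA2, one_mul]
    _ = A⁻¹ * (B * A) * A⁻¹ := by rw [hcomm]
    _ = A⁻¹ * B := by rw [mul_assoc, mul_assoc, hA1, mul_one]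
  have c2 : A * B⁻¹ = B⁻¹ * A := by
    calc A * B⁻¹ = B⁻¹ * (B * A) * B⁻¹ := by rw [← mul_assoc, hB2, one_mul]
    _ = B⁻¹ * (A * B) * B⁻¹ := by rw [hcomm]
    _ = B⁻¹ * A := by rw [mul_assoc, mul_assoc, hB1, mul_one]
  have c3 : B⁻¹ * A⁻¹ = A⁻¹ * B⁻¹ := by
    calc B⁻¹ * A⁻¹ = A⁻¹ * (A * B⁻¹) * A⁻¹ := by rw [← mul_assoc, hA2, one_mul]
    _ = A⁻¹ * (B⁻¹ * A) * A⁻¹ := by rw [c2]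
    _ = A⁻¹ * B⁻¹ := by rw [mul_assoc, mul_assoc, hA1, mul_one]
  have hneg1 : (-1 : Matrix (Fin l ⊕ Fin l) (Fin l ⊕ Fin l) 𝕂) =
      Matrix.fromBlocks (-1) 0 0 (-1) := by
    rw [← Matrix.fromBlocks_one, Matrix.fromBlocks_neg, neg_zero]
  unfold IsLMQS
  simp only [List.reverse, List.reverseAux, List.map, List.prod, Mblk, List.foldr, mul_one,
    Matrix.fromBlocks_multiply, hneg1]
  have r1 : ∀ x : Matrix (Fin l) (Fin l) 𝕂, B * (A⁻¹ * x) = A⁻¹ * (B * x) := by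
    intro x; rw [← mul_assoc, c1, mul_assoc]
  have r2 : ∀ x : Matrix (Fin l) (Fin l) 𝕂, B * (B⁻¹ * x) = x := by
    intro x; rw [← mul_assoc, hB1, one_mul]
  have r3 : ∀ x : Matrix (Fin l) (Fin l) 𝕂, B * (A * x) = A * (B * x) := by
    intro x; rw [← mul_assoc, ← hcomm, mul_assoc]
  have r4 : ∀ x : Matrix (Fin l) (Fin l) 𝕂, A * (A⁻¹ * x) = x := by
    intro x; rw [← mul_assoc, hA1, one_mul]
  have r5 : ∀ x : Matrix (Fin l) (Fin l) 𝕂, A * (B⁻¹ * x) = B⁻¹ * (A * x) := by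
    intro x; rw [← mul_assoc, c2, mul_assoc]
  have r6 : ∀ x : Matrix (Fin l) (Fin l) 𝕂, B⁻¹ * (A⁻¹ * x) = A⁻¹ * (B⁻¹ * x) := by
    intro x; rw [← mul_assoc, c3, mul_assoc]
  have r7 : ∀ x : Matrix (Fin l) (Fin l) 𝕂, A⁻¹ * (A * x) = x := by
    intro x; rw [← mul_assoc, hA2, one_mul]
  have r8 : ∀ x : Matrix (Fin l) (Fin l) 𝕂, B⁻¹ * (B * x) = x := by
    intro x; rw [← mul_assoc, hB2, one_mul]
  have r9 : ∀ x : Matrix (Fin l) (Fin l) 𝕂, B⁻¹ * (A * (B * x)) = A * x := by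
    intro x; rw [← r3, r8]
  have r9' : B⁻¹ * (A * B) = A := by rw [hcomm, r8]
  have r10 : A⁻¹ * (B * A) = B := by rw [← hcomm, r7]
  have r10' : ∀ x : Matrix (Fin l) (Fin l) 𝕂, A⁻¹ * (B * (A * x)) = B * x := by
    intro x; rw [r3 x, r7]
  rw [Matrix.fromBlocks_inj]
  refine ⟨?_, ?_, ?_, ?_⟩ <;>
    simp only [mul_add, add_mul, mul_one, one_mul, mul_zero, zero_mul, add_zero, zero_add,
      mul_neg, neg_mul, mul_assoc, neg_neg, neg_zero, r1, r2, r3, r4, r5, r6, r7, r8,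
      hA1, hA2, hB1, hB2, c1, c2, c3, r9, r9', r10, r10'] <;>
    abel
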